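/- Let n ≥ 2, y₀ ∈ ℝⁿ, 0 < r₁ < r₂, and let η : (r₁, r₂) → [0,∞] be a Lebesgue measurable function with ∫_{r₁}^{r₂} η(r) dr ≥ 1. Define ρ : ℝⁿ → [0,∞] by ρ(y) = η(|y−y₀|) for y in the annulus A(y₀, r₁, r₂) and ρ(y) = 0 otherwise. Then for every locally rectifiable path γ : [a, b] → ℝⁿ with γ(a) ∈ S(y₀, r₁), γ(b) ∈ S(y₀, r₂) and γ(t) ∈ A(y₀, r₁, r₂) for t ∈ (a, b), the arc-length integral satisfies ∫_γ ρ ds ≥ ∫_{r₁}^{r₂} η(r) dr ≥ 1; that is, ρ is admissible for the family Γ(S(y₀, r₁), S(y₀, r₂), A(y₀, r₁, r₂)). -/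

import Mathlib

open MeasureTheory Metric Set Filter Topology
open scoped ENNReal NNReal

noncomputable section
open scoped Classical

/-- The (clamped) total-variation function of `γ` on `[a, b]`. -/
def varFun (n : ℕ) (γ : ℝ → EuclideanSpace ℝ (Fin n)) (a b t : ℝ) : ℝ :=
  (eVariationOn γ (Set.Icc a (max a (min t b)))).toReal

/-- The arc-length (Lebesgue–Stieltjes) integral `∫_γ ρ ds` of a Borel function
`ρ : ℝⁿ → [0,∞]` along the path `γ : [a, b] → ℝⁿ`, defined via the Lebesgue–Stieltjes
measure associated to the arc-length (variation) function of `γ`.  It is `∞` when `γ`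
is not rectifiable. -/
def arcIntegral (n : ℕ) (ρ : EuclideanSpace ℝ (Fin n) → ℝ≥0∞)
    (γ : ℝ → EuclideanSpace ℝ (Fin n)) (a b : ℝ) : ℝ≥0∞ :=
  if h : BoundedVariationOn γ (Set.Icc a b) ∧ Monotone (varFun n γ a b) then
    ∫⁻ t in Set.Icc a b, ρ (γ t) ∂h.2.stieltjesFunction.measure
  else ∞

/-- A (continuous) path in `ℝⁿ` defined on a compact interval `[a, b]`. -/
structure PathOn (n : ℕ) where
  a : ℝ
  b : ℝ
  hab : a ≤ b
  toFun : ℝ → EuclideanSpace ℝ (Fin n)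
  cont : ContinuousOn toFun (Set.Icc a b)

/-- A Borel function `ρ : ℝⁿ → [0,∞]` is admissible for a family `Γ` of paths if
`∫_γ ρ ds ≥ 1` for every (locally rectifiable) path `γ ∈ Γ`. -/
def IsAdmissibleFor (n : ℕ) (ρ : EuclideanSpace ℝ (Fin n) → ℝ≥0∞)
    (Γ : Set (PathOn n)) : Prop :=
  Measurable ρ ∧ ∀ γ ∈ Γ, 1 ≤ arcIntegral n ρ γ.toFun γ.a γ.b

/-- The (conformal) modulus `M(Γ)` of a family of paths in `ℝⁿ`. -/
def modulus (n : ℕ) (Γ : Set (PathOn n)) : ℝ≥0∞ :=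
  ⨅ (ρ : EuclideanSpace ℝ (Fin n) → ℝ≥0∞) (_ : IsAdmissibleFor n ρ Γ),
    ∫⁻ x, ρ x ^ n

/-- The spherical annulus `A(y₀, r₁, r₂) = {y : r₁ < |y − y₀| < r₂}`. -/
def annulus (n : ℕ) (y₀ : EuclideanSpace ℝ (Fin n)) (r₁ r₂ : ℝ) :
    Set (EuclideanSpace ℝ (Fin n)) :=
  {y | r₁ < dist y y₀ ∧ dist y y₀ < r₂}

/-- `Γ(E, F, G)`: the family of all paths `γ : [a,b] → ℝⁿ` with `γ(a) ∈ E`,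
`γ(b) ∈ F` and `γ(t) ∈ G` for `t ∈ (a, b)`. -/
def pathsBetween (n : ℕ) (E F G : Set (EuclideanSpace ℝ (Fin n))) : Set (PathOn n) :=
  {γ | γ.toFun γ.a ∈ E ∧ γ.toFun γ.b ∈ F ∧ ∀ t ∈ Set.Ioo γ.a γ.b, γ.toFun t ∈ G}

/-- `Γ_f(y₀, r₁, r₂)`: the family of all paths `γ` in `D` such that
`f ∘ γ ∈ Γ(S(y₀,r₁), S(y₀,r₂), A(y₀,r₁,r₂))`. -/
def liftedFamily (n : ℕ) (D : Set (EuclideanSpace ℝ (Fin n)))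
    (f : EuclideanSpace ℝ (Fin n) → EuclideanSpace ℝ (Fin n))
    (y₀ : EuclideanSpace ℝ (Fin n)) (r₁ r₂ : ℝ) : Set (PathOn n) :=
  {γ | (∀ t ∈ Set.Icc γ.a γ.b, γ.toFun t ∈ D) ∧
    f (γ.toFun γ.a) ∈ Metric.sphere y₀ r₁ ∧ f (γ.toFun γ.b) ∈ Metric.sphere y₀ r₂ ∧
    ∀ t ∈ Set.Ioo γ.a γ.b, f (γ.toFun t) ∈ annulus n y₀ r₁ r₂}

/-- `f` satisfies the inverse Poletsky inequality at `y₀` with majorant `Q`. -/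
def InvPoletsky (n : ℕ) (D : Set (EuclideanSpace ℝ (Fin n)))
    (f : EuclideanSpace ℝ (Fin n) → EuclideanSpace ℝ (Fin n))
    (Q : EuclideanSpace ℝ (Fin n) → ℝ≥0∞) (y₀ : EuclideanSpace ℝ (Fin n)) : Prop :=
  ∃ r₀ > (0 : ℝ), ∀ r₁ r₂ : ℝ, 0 < r₁ → r₁ < r₂ → r₂ < r₀ →
    ∀ η : ℝ → ℝ≥0∞, Measurable η → 1 ≤ ∫⁻ r in Set.Ioo r₁ r₂, η r →
      modulus n (liftedFamily n D f y₀ r₁ r₂) ≤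
        ∫⁻ y in (f '' D) ∩ annulus n y₀ r₁ r₂, Q y * η (dist y y₀) ^ n

/-- `f` is discrete on `D`: every fiber has no accumulation point in `D`. -/
def IsDiscreteOn (n : ℕ) (D : Set (EuclideanSpace ℝ (Fin n)))
    (f : EuclideanSpace ℝ (Fin n) → EuclideanSpace ℝ (Fin n)) : Prop :=
  ∀ y, ∀ x ∈ D, ¬ AccPt x (Filter.principal {z | z ∈ D ∧ f z = y})

/-- `f` is open on `D`: the image of every open subset of `D` is open. -/
def IsOpenOn (n : ℕ) (D : Set (EuclideanSpace ℝ (Fin n)))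
    (f : EuclideanSpace ℝ (Fin n) → EuclideanSpace ℝ (Fin n)) : Prop :=
  ∀ U : Set (EuclideanSpace ℝ (Fin n)), IsOpen U → U ⊆ D → IsOpen (f '' U)

/-- The chordal (spherical) metric `h(x,y) = |x−y|/(√(1+|x|²)·√(1+|y|²))`. -/
def chordal (n : ℕ) (x y : EuclideanSpace ℝ (Fin n)) : ℝ :=
  dist x y / (Real.sqrt (1 + ‖x‖ ^ 2) * Real.sqrt (1 + ‖y‖ ^ 2))

/-- A family of mappings of `D` is equicontinuous at `x₀ ∈ D` w.r.t. the chordal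
metric on the target. -/
def EquicontinuousAtPt (n : ℕ) (D : Set (EuclideanSpace ℝ (Fin n)))
    (𝓕 : Set (EuclideanSpace ℝ (Fin n) → EuclideanSpace ℝ (Fin n)))
    (x₀ : EuclideanSpace ℝ (Fin n)) : Prop :=
  ∀ ε > (0 : ℝ), ∃ δ > (0 : ℝ), ∀ f ∈ 𝓕, ∀ x ∈ D, dist x x₀ < δ →
    chordal n (f x) (f x₀) < ε


private lemma annulus_measurable (n : ℕ) (y₀ : EuclideanSpace ℝ (Fin n)) (r₁ r₂ : ℝ) :
    MeasurableSet (annulus n y₀ r₁ r₂) := by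
  have : annulus n y₀ r₁ r₂ = (fun y => dist y y₀) ⁻¹' Set.Ioo r₁ r₂ := by
    ext y; simp [annulus, Set.mem_Ioo]
  rw [this]
  exact ((continuous_id.dist continuous_const).measurable) measurableSet_Ioo

private lemma rho_measurable (n : ℕ) (y₀ : EuclideanSpace ℝ (Fin n)) (r₁ r₂ : ℝ)
    (η : ℝ → ℝ≥0∞) (hη : Measurable η)
    (ρ : EuclideanSpace ℝ (Fin n) → ℝ≥0∞)
    (hρ : ∀ y, ρ y = if y ∈ annulus n y₀ r₁ r₂ then η (dist y y₀) else 0) :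
    Measurable ρ := by
  have : ρ = fun y => if y ∈ annulus n y₀ r₁ r₂ then η (dist y y₀) else 0 := funext hρ
  rw [this]
  exact Measurable.ite (annulus_measurable n y₀ r₁ r₂)
    (hη.comp (continuous_id.dist continuous_const).measurable) measurable_const

private lemma key_estimate (n : ℕ) (y₀ : EuclideanSpace ℝ (Fin n)) (r₁ r₂ : ℝ)
    (h12 : r₁ < r₂) (η : ℝ → ℝ≥0∞) (hη : Measurable η)
    (ρ : EuclideanSpace ℝ (Fin n) → ℝ≥0∞)
    (hρ : ∀ y, ρ y = if y ∈ annulus n y₀ r₁ r₂ then η (dist y y₀) else 0)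
    (γ : ℝ → EuclideanSpace ℝ (Fin n)) (a b : ℝ) (hab : a < b)
    (hcont : ContinuousOn γ (Set.Icc a b))
    (hBV : BoundedVariationOn γ (Set.Icc a b))
    (hMono : Monotone (varFun n γ a b))
    (hga : dist (γ a) y₀ = r₁) (hgb : dist (γ b) y₀ = r₂)
    (hmid : ∀ t ∈ Set.Ioo a b, γ t ∈ annulus n y₀ r₁ r₂) :
    (∫⁻ r in Set.Ioo r₁ r₂, η r) ≤
      ∫⁻ t in Set.Icc a b, ρ (γ t) ∂hMono.stieltjesFunction.measure := by
  classical
  -- the clamp to `[a, b]`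
  set c : ℝ → ℝ := fun t => max a (min t b) with hc_def
  have hc_proj : ∀ t, c t = ((Set.projIcc a b hab.le t : Set.Icc a b) : ℝ) := by
    intro t; simp [hc_def, Set.coe_projIcc, min_comm]
  have hc_lipschitz : LipschitzWith 1 c := by
    have h : c = (fun x : Set.Icc a b => (x : ℝ)) ∘ Set.projIcc a b hab.le :=
      funext fun t => hc_proj t
    rw [h]
    simpa using (LipschitzWith.subtype_val (Set.Icc a b)).comp (LipschitzWith.projIcc hab.le)
  have hc_cont : Continuous c := hc_lipschitz.continuous
  have hc_mono : Monotone c := fun s t hst =>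
    max_le_max le_rfl (min_le_min hst le_rfl)
  have hc_mem : ∀ t, c t ∈ Set.Icc a b :=
    fun t => ⟨le_max_left _ _, max_le hab.le (min_le_right _ _)⟩
  have hc_fix : ∀ t ∈ Set.Icc a b, c t = t := by
    intro t ht
    show max a (min t b) = t
    rw [min_eq_left ht.2, max_eq_right ht.1]
  have hc_lip : ∀ s t : ℝ, s ≤ t → c t - c s ≤ t - s := by
    intro s t hst
    have h1 := hc_lipschitz.dist_le_mul t s
    rw [Real.dist_eq, Real.dist_eq] at h1
    norm_num at h1
    have h2 := le_of_abs_le h1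
    have h3 : |t - s| = t - s := abs_of_nonneg (by linarith)
    linarith
  -- the clamped path and the distance function
  set g : ℝ → EuclideanSpace ℝ (Fin n) := fun t => γ (c t) with hg_def
  have hg_cont : Continuous g := hcont.comp_continuous hc_cont hc_mem
  have hg_meas : Measurable g := hg_cont.measurable
  set u : ℝ → ℝ := fun t => dist (g t) y₀ with hu_def
  have hu_cont : Continuous u := hg_cont.dist continuous_const
  have hg_fix : ∀ t ∈ Set.Icc a b, g t = γ t := fun t ht => by
    simp only [hg_def]; rw [hc_fix t ht]
  have hdist_bounds : ∀ σ ∈ Set.Icc a b, r₁ ≤ dist (γ σ) y₀ ∧ dist (γ σ) y₀ ≤ r₂ := by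
    intro σ hσ
    rcases eq_or_lt_of_le hσ.1 with h1 | h1
    · rw [← h1, hga]; exact ⟨le_rfl, h12.le⟩
    rcases eq_or_lt_of_le hσ.2 with h2 | h2
    · rw [h2, hgb]; exact ⟨h12.le, le_rfl⟩
    · have h := hmid σ ⟨h1, h2⟩
      exact ⟨h.1.le, h.2.le⟩
  have hu_bounds : ∀ t, r₁ ≤ u t ∧ u t ≤ r₂ := by
    intro t
    simp only [hu_def, hg_def]
    exact hdist_bounds (c t) (hc_mem t)
  have hu_a : u a = r₁ := by
    simp only [hu_def]; rw [hg_fix a ⟨le_rfl, hab.le⟩]; exact hga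
  have hu_b : u b = r₂ := by
    simp only [hu_def]; rw [hg_fix b ⟨hab.le, le_rfl⟩]; exact hgb
  -- basic properties of the variation function
  set F : ℝ → ℝ := varFun n γ a b with hF_def
  have hF_eq : ∀ t, F t = (eVariationOn γ (Set.Icc a (c t))).toReal := fun t => rfl
  have hF_c : ∀ t, F (c t) = F t := by
    intro t
    rw [hF_eq, hF_eq, hc_fix (c t) (hc_mem t)]
  have hBV' : eVariationOn γ (Set.Icc a b) ≠ ⊤ := hBV
  have hF_add : ∀ s t : ℝ, s ≤ t →
      F t = F s + (eVariationOn γ (Set.Icc (c s) (c t))).toReal := by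
    intro s t hst
    have h1 := eVariationOn.Icc_add_Icc γ (s := (Set.univ : Set ℝ)) (hc_mem s).1
      (hc_mono hst) (Set.mem_univ (c s))
    simp only [Set.univ_inter] at h1
    have fin1 : eVariationOn γ (Set.Icc a (c s)) ≠ ⊤ :=
      ne_top_of_le_ne_top hBV' (eVariationOn.mono γ (Set.Icc_subset_Icc le_rfl (hc_mem s).2))
    have fin2 : eVariationOn γ (Set.Icc (c s) (c t)) ≠ ⊤ :=
      ne_top_of_le_ne_top hBV'
        (eVariationOn.mono γ (Set.Icc_subset_Icc (hc_mem s).1 (hc_mem t).2))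
    rw [hF_eq, hF_eq, ← h1, ENNReal.toReal_add fin1 fin2]
  have hdist_le : ∀ s t : ℝ, s ≤ t → dist (g s) (g t) ≤ F t - F s := by
    intro s t hst
    have fin2 : eVariationOn γ (Set.Icc (c s) (c t)) ≠ ⊤ :=
      ne_top_of_le_ne_top hBV'
        (eVariationOn.mono γ (Set.Icc_subset_Icc (hc_mem s).1 (hc_mem t).2))
    have h1 : edist (γ (c s)) (γ (c t)) ≤ eVariationOn γ (Set.Icc (c s) (c t)) :=
      eVariationOn.edist_le γ ⟨le_rfl, hc_mono hst⟩ ⟨hc_mono hst, le_rfl⟩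
    have h2 : dist (g s) (g t) ≤ (eVariationOn γ (Set.Icc (c s) (c t))).toReal := by
      rw [dist_edist]
      exact ENNReal.toReal_mono fin2 h1
    have h3 := hF_add s t hst
    linarith
  have hu_lip : ∀ s t : ℝ, s ≤ t → |u t - u s| ≤ F t - F s := by
    intro s t hst
    have h1 : |u t - u s| ≤ dist (g t) (g s) := by
      simp only [hu_def]
      exact abs_dist_sub_le _ _ _
    rw [dist_comm] at h1
    exact h1.trans (hdist_le s t hst)
  -- the running maximum
  set M : ℝ → ℝ := fun t => sSup (u '' Set.Icc a (c t)) with hM_def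
  have hicc_ne : ∀ t, (Set.Icc a (c t)).Nonempty := fun t => ⟨a, le_rfl, (hc_mem t).1⟩
  have him_compact : ∀ t, IsCompact (u '' Set.Icc a (c t)) :=
    fun t => (isCompact_Icc).image hu_cont
  have him_ne : ∀ t, (u '' Set.Icc a (c t)).Nonempty := fun t => (hicc_ne t).image u
  have him_bdd : ∀ t, BddAbove (u '' Set.Icc a (c t)) := fun t => (him_compact t).bddAbove
  have hM_attain : ∀ t, ∃ σ ∈ Set.Icc a (c t), u σ = M t := by
    intro t
    have h := (him_compact t).sSup_mem (him_ne t)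
    rcases h with ⟨σ, hσ, hσ'⟩
    exact ⟨σ, hσ, hσ'⟩
  have hu_le_M : ∀ t, ∀ σ ∈ Set.Icc a (c t), u σ ≤ M t :=
    fun t σ hσ => le_csSup (him_bdd t) ⟨σ, hσ, rfl⟩
  have hM_mono : Monotone M := by
    intro s t hst
    exact csSup_le_csSup (him_bdd t) (him_ne s)
      (Set.image_mono (Set.Icc_subset_Icc le_rfl (hc_mono hst)))
  have hM_bounds : ∀ t, r₁ ≤ M t ∧ M t ≤ r₂ := by
    intro t
    constructor
    · have := hu_le_M t a ⟨le_rfl, (hc_mem t).1⟩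
      rw [hu_a] at this; exact this
    · exact csSup_le (him_ne t) (by rintro x ⟨σ, _, rfl⟩; exact (hu_bounds σ).2)
  have hM_lt_a : ∀ t, t < a → M t = r₁ := by
    intro t ht
    have hct : c t = a := by
      simp only [hc_def]
      rw [max_eq_left]
      exact (min_le_left t b).trans ht.le
    simp only [hM_def, hct, Set.Icc_self, Set.image_singleton, csSup_singleton]
    exact hu_a
  have hc_le_self : ∀ t, a ≤ t → c t ≤ t := by
    intro t ht
    simp only [hc_def]
    exact max_le ht (min_le_left t b)
  -- increments of M are dominated by increments of F
  have hMF : ∀ s t : ℝ, s ≤ t → M t - M s ≤ F t - F s := by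
    intro s t hst
    obtain ⟨σ, hσ, hσ'⟩ := hM_attain t
    rcases le_or_gt σ (c s) with h1 | h1
    · have : M t ≤ M s := hσ' ▸ hu_le_M s σ ⟨hσ.1, h1⟩
      have : M t - M s ≤ 0 := by linarith
      have hF0 : 0 ≤ F t - F s := sub_nonneg.mpr (hMono hst)
      linarith
    · have h2 : u (c s) ≤ M s := hu_le_M s (c s) ⟨(hc_mem s).1, le_rfl⟩
      have h3 : |u σ - u (c s)| ≤ F σ - F (c s) := hu_lip (c s) σ h1.le
      have h4 : F σ ≤ F t := by
        have := hMono (show σ ≤ c t from hσ.2)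
        rwa [hF_c t] at this
      have h5 : F (c s) = F s := hF_c s
      have h6 := le_of_abs_le h3
      linarith
  -- M is right-continuous
  have hM_rc : ∀ x, ContinuousWithinAt M (Set.Ici x) x := by
    intro x
    rw [Metric.continuousWithinAt_iff]
    intro ε hε
    obtain ⟨δ, hδ, hδ'⟩ := Metric.continuousAt_iff.mp (hu_cont.continuousAt (x := c x))
      (ε / 2) (by linarith)
    refine ⟨δ, hδ, ?_⟩
    intro t ht htd
    have hxt : x ≤ t := ht
    have h1 : M x ≤ M t := hM_mono hxt
    have key : M t ≤ M x + ε / 2 := by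
      have hsplit : Set.Icc a (c t) = Set.Icc a (c x) ∪ Set.Icc (c x) (c t) :=
        (Set.Icc_union_Icc_eq_Icc (hc_mem x).1 (hc_mono hxt)).symm
      have hbdd2 : BddAbove (u '' Set.Icc (c x) (c t)) :=
        ((isCompact_Icc).image hu_cont).bddAbove
      have hne2 : (u '' Set.Icc (c x) (c t)).Nonempty :=
        (Set.nonempty_Icc.mpr (hc_mono hxt)).image u
      have hMt : M t = max (M x) (sSup (u '' Set.Icc (c x) (c t))) := by
        simp only [hM_def]
        rw [hsplit, Set.image_union]
        exact csSup_union (him_bdd x) (him_ne x) hbdd2 hne2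
      have hsup2 : sSup (u '' Set.Icc (c x) (c t)) ≤ M x + ε / 2 := by
        apply csSup_le hne2
        rintro y ⟨σ, hσ, rfl⟩
        have hdσ : dist σ (c x) < δ := by
          rw [Real.dist_eq, abs_of_nonneg (by linarith [hσ.1])]
          have h5 : c t - c x ≤ t - x := hc_lip x t hxt
          have h6 : dist t x < δ := htd
          rw [Real.dist_eq, abs_of_nonneg (by linarith)] at h6
          linarith [hσ.2]
        have := hδ' hdσ
        rw [Real.dist_eq] at this
        have h7 := le_of_abs_le this.le
        have h8 : u (c x) ≤ M x := hu_le_M x (c x) ⟨(hc_mem x).1, le_rfl⟩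
        linarith
      rw [hMt]
      exact max_le (by linarith) hsup2
    rw [Real.dist_eq, abs_of_nonneg (by linarith)]
    linarith
  -- the Stieltjes functions
  set SM : StieltjesFunction ℝ := ⟨M, hM_mono, hM_rc⟩ with hSM_def
  set SF : StieltjesFunction ℝ := hMono.stieltjesFunction with hSF_def
  have hSF_eq : ∀ x, SF x = Function.rightLim F x := fun x => hMono.stieltjesFunction_eq x
  have hMSF : ∀ s t : ℝ, s ≤ t → M t - M s ≤ SF t - SF s := by
    intro s t hst
    rcases eq_or_lt_of_le hst with rfl | hst'
    · simp
    have htend : Filter.Tendsto (fun s' => M t - M s') (nhdsWithin s (Set.Ioi s))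
        (nhds (M t - M s)) := by
      apply Filter.Tendsto.sub tendsto_const_nhds
      exact (hM_rc s).mono_left (nhdsWithin_mono s Set.Ioi_subset_Ici_self)
    apply le_of_tendsto htend
    filter_upwards [Ioc_mem_nhdsGT hst'] with s' hs'
    have h1 : M t - M s' ≤ F t - F s' := hMF s' t hs'.2
    have h2 : F t ≤ SF t := by
      rw [hSF_eq t]
      exact hMono.le_rightLim le_rfl
    have h3 : SF s ≤ F s' := by
      rw [hSF_eq s]
      exact hMono.rightLim_le hs'.1
    linarith
  -- decomposition of the Stieltjes measure
  set D : StieltjesFunction ℝ :=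
    ⟨fun x => SF x - M x,
     fun s t hst => by
       have h := hMSF s t hst
       show SF s - M s ≤ SF t - M t
       linarith,
     fun x => (SF.right_continuous x).sub (hM_rc x)⟩ with hD_def
  have hsum : SM + D = SF := by
    apply StieltjesFunction.ext
    intro x
    show M x + (SF x - M x) = SF x
    ring
  have hmeasure_sum : SF.measure = SM.measure + D.measure := by
    rw [← hsum, StieltjesFunction.measure_add]
  have hSM_le : ∀ s : Set ℝ, SM.measure s ≤ SF.measure s := by
    intro s
    rw [hmeasure_sum]
    simp only [Measure.coe_add, Pi.add_apply]
    exact le_self_add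
  -- the first hitting time
  set T : ℝ → Set ℝ := fun r => {t | t ∈ Set.Icc a b ∧ r ≤ u t} with hT_def
  set τ : ℝ → ℝ := fun r => sInf (T r ∪ {b}) with hτ_def
  have hT_bdd : ∀ r, BddBelow (T r ∪ {b}) := by
    intro r
    refine ⟨a, ?_⟩
    rintro t (ht | ht)
    · exact ht.1.1
    · simp only [Set.mem_singleton_iff] at ht; rw [ht]; exact hab.le
  have hτ_mono : Monotone τ := by
    intro r r' hrr'
    refine csInf_le_csInf (hT_bdd r) ⟨b, Set.mem_union_right _ rfl⟩ ?_
    rintro t (ht | ht)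
    · exact Set.mem_union_left _ ⟨ht.1, hrr'.trans ht.2⟩
    · exact Set.mem_union_right _ ht
  have hτ_meas : Measurable τ := hτ_mono.measurable
  -- properties of τ on (r₁, r₂)
  have hτ_props : ∀ r ∈ Set.Ioo r₁ r₂, τ r ∈ Set.Ioo a b ∧ u (τ r) = r ∧
      (∀ t ∈ T r, τ r ≤ t) := by
    intro r hr
    have hbT : b ∈ T r := ⟨⟨hab.le, le_rfl⟩, by rw [hu_b]; exact hr.2.le⟩
    have hTr : T r ∪ {b} = T r := Set.union_eq_self_of_subset_right (by
      intro x hx; simp only [Set.mem_singleton_iff] at hx; rw [hx]; exact hbT)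
    have hT_closed : IsClosed (T r) := by
      have : T r = Set.Icc a b ∩ u ⁻¹' Set.Ici r := rfl
      rw [this]
      exact isClosed_Icc.inter (isClosed_Ici.preimage hu_cont)
    have hT_bdd' : BddBelow (T r) := hTr ▸ hT_bdd r
    have hτ_mem : τ r ∈ T r := by
      simp only [hτ_def, hTr]
      exact hT_closed.csInf_mem ⟨b, hbT⟩ hT_bdd'
    have hτ_lb : ∀ t ∈ T r, τ r ≤ t := by
      intro t ht
      simp only [hτ_def, hTr]
      exact csInf_le hT_bdd' ht
    have hτ_gt_a : a < τ r := by
      rcases eq_or_lt_of_le hτ_mem.1.1 with h | h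
      · exfalso
        have := hτ_mem.2
        rw [← h, hu_a] at this
        exact absurd this (not_le.mpr hr.1)
      · exact h
    have huτ : u (τ r) = r := by
      by_contra hne
      have hgt : r < u (τ r) := lt_of_le_of_ne hτ_mem.2 (Ne.symm hne)
      obtain ⟨δ, hδ, hδ'⟩ := Metric.continuousAt_iff.mp (hu_cont.continuousAt (x := τ r))
        (u (τ r) - r) (by linarith)
      set t : ℝ := max a (τ r - δ / 2) with ht_def
      have ht_lt : t < τ r := max_lt hτ_gt_a (by linarith)
      have ht_mem : t ∈ Set.Icc a b := ⟨le_max_left _ _, ht_lt.le.trans hτ_mem.1.2⟩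
      have htd : dist t (τ r) < δ := by
        rw [Real.dist_eq, abs_of_nonpos (by linarith)]
        have : τ r - δ / 2 ≤ t := le_max_right _ _
        linarith
      have := hδ' htd
      rw [Real.dist_eq] at this
      have h1 := abs_lt.mp this
      have h2 : r ≤ u t := by linarith [h1.1]
      exact absurd (hτ_lb t ⟨ht_mem, h2⟩) (not_le.mpr ht_lt)
    have hτ_lt_b : τ r < b := by
      rcases eq_or_lt_of_le hτ_mem.1.2 with h | h
      · exfalso
        rw [h, hu_b] at huτ
        exact absurd huτ.symm (ne_of_lt hr.2)
      · exact h
    exact ⟨⟨hτ_gt_a, hτ_lt_b⟩, huτ, hτ_lb⟩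
  -- characterization: τ r ≤ t ↔ r ≤ M t
  have hτ_iff : ∀ r ∈ Set.Ioo r₁ r₂, ∀ t : ℝ, τ r ≤ t ↔ r ≤ M t := by
    intro r hr t
    obtain ⟨hτab, huτ, hτ_lb⟩ := hτ_props r hr
    constructor
    · intro h
      have h1 : τ r ∈ Set.Icc a (c t) := by
        constructor
        · exact hτab.1.le
        · simp only [hc_def]
          exact le_max_of_le_right (le_min h hτab.2.le)
      have := hu_le_M t (τ r) h1
      rwa [huτ] at this
    · intro h
      rcases lt_or_ge t a with hta | hta
      · exfalso
        rw [hM_lt_a t hta] at h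
        exact absurd h (not_le.mpr hr.1)
      · obtain ⟨σ, hσ, hσ'⟩ := hM_attain t
        have hσT : σ ∈ T r := by
          refine ⟨⟨hσ.1, hσ.2.trans (hc_mem t).2⟩, ?_⟩
          rw [hσ']; exact h
        exact (hτ_lb σ hσT).trans (hσ.2.trans (hc_le_self t hta))
  -- the pushforward measure equals the Stieltjes measure of M
  set κ : Measure ℝ := Measure.map τ (volume.restrict (Set.Ioo r₁ r₂)) with hκ_def
  have hκ_Ioc : ∀ s t : ℝ, s < t → κ (Set.Ioc s t) = ENNReal.ofReal (M t - M s) := by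
    intro s t hst
    rw [hκ_def, Measure.map_apply hτ_meas measurableSet_Ioc,
      Measure.restrict_apply (hτ_meas measurableSet_Ioc)]
    have hsub1 : τ ⁻¹' Set.Ioc s t ∩ Set.Ioo r₁ r₂ ⊆ Set.Ioc (M s) (M t) := by
      rintro r ⟨hr1, hr2⟩
      constructor
      · by_contra hle
        push_neg at hle
        exact absurd ((hτ_iff r hr2 s).mpr hle) (not_le.mpr hr1.1)
      · exact (hτ_iff r hr2 t).mp hr1.2
    have hsub2 : Set.Ioo (M s) (M t) ⊆ τ ⁻¹' Set.Ioc s t ∩ Set.Ioo r₁ r₂ := by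
      intro r hr
      have hrIoo : r ∈ Set.Ioo r₁ r₂ :=
        ⟨lt_of_le_of_lt (hM_bounds s).1 hr.1, lt_of_lt_of_le hr.2 (hM_bounds t).2⟩
      refine ⟨⟨?_, (hτ_iff r hrIoo t).mpr hr.2.le⟩, hrIoo⟩
      by_contra hle
      push_neg at hle
      exact absurd ((hτ_iff r hrIoo s).mp hle) (not_le.mpr hr.1)
    apply le_antisymm
    · calc volume (τ ⁻¹' Set.Ioc s t ∩ Set.Ioo r₁ r₂) ≤ volume (Set.Ioc (M s) (M t)) :=
            measure_mono hsub1
        _ = ENNReal.ofReal (M t - M s) := Real.volume_Ioc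
    · calc ENNReal.ofReal (M t - M s) = volume (Set.Ioo (M s) (M t)) := Real.volume_Ioo.symm
        _ ≤ volume (τ ⁻¹' Set.Ioc s t ∩ Set.Ioo r₁ r₂) := measure_mono hsub2
  have hκ_fin : IsFiniteMeasure κ := by
    constructor
    rw [hκ_def, Measure.map_apply hτ_meas MeasurableSet.univ]
    simp only [Set.preimage_univ]
    rw [Measure.restrict_apply MeasurableSet.univ]
    simp only [Set.univ_inter]
    rw [Real.volume_Ioo]
    exact ENNReal.ofReal_lt_top
  have hκ_eq : κ = SM.measure := by
    haveI := hκ_fin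
    refine Measure.ext_of_Ioc κ SM.measure (fun s t hst => ?_)
    rw [hκ_Ioc s t hst, StieltjesFunction.measure_Ioc]
  -- κ is dominated by the restricted Stieltjes measure of F
  have hκ_le : κ ≤ SF.measure.restrict (Set.Icc a b) := by
    rw [Measure.le_iff]
    intro B hB
    have hstep : κ B = κ (B ∩ Set.Ioo a b) := by
      rw [hκ_def, Measure.map_apply hτ_meas hB,
        Measure.map_apply hτ_meas (hB.inter measurableSet_Ioo),
        Measure.restrict_apply (hτ_meas hB),
        Measure.restrict_apply (hτ_meas (hB.inter measurableSet_Ioo))]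
      congr 1
      ext r
      simp only [Set.mem_inter_iff, Set.mem_preimage]
      constructor
      · rintro ⟨hr1, hr2⟩
        exact ⟨⟨hr1, (hτ_props r hr2).1⟩, hr2⟩
      · rintro ⟨⟨hr1, _⟩, hr2⟩
        exact ⟨hr1, hr2⟩
    rw [hstep, hκ_eq, Measure.restrict_apply hB]
    calc SM.measure (B ∩ Set.Ioo a b) ≤ SF.measure (B ∩ Set.Ioo a b) := hSM_le _
      _ ≤ SF.measure (B ∩ Set.Icc a b) :=
          measure_mono (Set.inter_subset_inter_right _ Set.Ioo_subset_Icc_self)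
  -- putting everything together
  have hρ_meas : Measurable ρ := rho_measurable n y₀ r₁ r₂ η hη ρ hρ
  have hρg_meas : Measurable (fun t => ρ (g t)) := hρ_meas.comp hg_meas
  calc (∫⁻ r in Set.Ioo r₁ r₂, η r)
      = ∫⁻ r in Set.Ioo r₁ r₂, ρ (g (τ r)) := by
        apply setLIntegral_congr_fun measurableSet_Ioo
        intro r hr
        obtain ⟨hτab, huτ, _⟩ := hτ_props r hr
        have h1 : g (τ r) = γ (τ r) := hg_fix (τ r) ⟨hτab.1.le, hτab.2.le⟩
        have h2 : γ (τ r) ∈ annulus n y₀ r₁ r₂ := hmid (τ r) hτab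
        have h3 : dist (γ (τ r)) y₀ = r := by
          rw [← h1]
          exact huτ
        beta_reduce
        rw [hρ, h1, if_pos h2, h3]
      _ = ∫⁻ t, ρ (g t) ∂κ := by
        rw [hκ_def, MeasureTheory.lintegral_map hρg_meas hτ_meas]
      _ ≤ ∫⁻ t, ρ (g t) ∂(SF.measure.restrict (Set.Icc a b)) :=
        lintegral_mono' hκ_le le_rfl
      _ = ∫⁻ t in Set.Icc a b, ρ (γ t) ∂SF.measure := by
        apply setLIntegral_congr_fun measurableSet_Icc
        intro t ht
        beta_reduce
        rw [hg_fix t ht]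
      _ = ∫⁻ t in Set.Icc a b, ρ (γ t) ∂hMono.stieltjesFunction.measure := rfl

/-- **Admissibility of the radial function (Väisälä's Theorem 5.7).** -/
theorem radial_function_is_admissible
    (n : ℕ) (hn : 2 ≤ n)
    (y₀ : EuclideanSpace ℝ (Fin n)) (r₁ r₂ : ℝ) (h1 : 0 < r₁) (h12 : r₁ < r₂)
    (η : ℝ → ℝ≥0∞) (hη : Measurable η)
    (hη1 : 1 ≤ ∫⁻ r in Set.Ioo r₁ r₂, η r)
    (ρ : EuclideanSpace ℝ (Fin n) → ℝ≥0∞)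
    (hρ : ∀ y, ρ y = if y ∈ annulus n y₀ r₁ r₂ then η (dist y y₀) else 0) :
    (∀ γ ∈ pathsBetween n (Metric.sphere y₀ r₁) (Metric.sphere y₀ r₂)
        (annulus n y₀ r₁ r₂),
      (∫⁻ r in Set.Ioo r₁ r₂, η r) ≤ arcIntegral n ρ γ.toFun γ.a γ.b) ∧
    IsAdmissibleFor n ρ
      (pathsBetween n (Metric.sphere y₀ r₁) (Metric.sphere y₀ r₂)
        (annulus n y₀ r₁ r₂)) := by
  have hmeas : Measurable ρ := rho_measurable n y₀ r₁ r₂ η hη ρ hρ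
  have main : ∀ γ ∈ pathsBetween n (Metric.sphere y₀ r₁) (Metric.sphere y₀ r₂)
      (annulus n y₀ r₁ r₂),
      (∫⁻ r in Set.Ioo r₁ r₂, η r) ≤ arcIntegral n ρ γ.toFun γ.a γ.b := by
    intro P hP
    obtain ⟨hA, hB, hmid⟩ := hP
    have hab : P.a < P.b := by
      rcases eq_or_lt_of_le P.hab with h | h
      · exfalso
        have hd1 : dist (P.toFun P.a) y₀ = r₁ := mem_sphere.mp hA
        have hd2 : dist (P.toFun P.b) y₀ = r₂ := mem_sphere.mp hB
        rw [← h, hd1] at hd2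
        exact absurd hd2 (ne_of_lt h12)
      · exact h
    unfold arcIntegral
    split_ifs with h
    · exact key_estimate n y₀ r₁ r₂ h12 η hη ρ hρ P.toFun P.a P.b hab P.cont h.1 h.2
        (mem_sphere.mp hA) (mem_sphere.mp hB) hmid
    · exact le_top
  exact ⟨main, hmeas, fun P hP => le_trans hη1 (main P hP)⟩


end
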